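/- Let w_1,…,w_{J} > 0 be positive reals and b_1,…,b_J ∈ ℝ satisfy b_1/w_1 ≥ b_2/w_2 ≥ ⋯ ≥ b_J/w_J. Let σ(t) = max(t,0). Then for all y ∈ ℝ, the nested expression σ(⋯σ(σ(w_1 y − b_1) + w_2 y − b_2)⋯ + w_J y − b_J) equals the sum Σ_{j=1}^{J} σ(w_j y − b_j). -/

import Mathlib

/-- The ReLU function `σ(t) = max(t,0)`. -/
def relu (t : ℝ) : ℝ := max t 0

/-- The nested expression `A_1 = σ(w_1 y − b_1)`, `A_{k+1} = σ(A_k + w_{k+1} y − b_{k+1})`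
(0-indexed: `nested w b y k` is `A_k`, with `nested w b y 0 = 0`). -/
def nested (w b : ℕ → ℝ) (y : ℝ) : ℕ → ℝ
  | 0 => 0
  | k + 1 => relu (nested w b y k + w k * y - b k)

/-- **Collapsing of nested ReLUs.** If all weights `w_j` (for `j < J`) are positive and
the thresholds `b_j / w_j` are nonincreasing in `j`, then the nested expression
`σ(⋯σ(σ(w_1 y − b_1) + w_2 y − b_2)⋯ + w_J y − b_J)` equals `Σ_{j<J} σ(w_j y − b_j)`,
for every `y ∈ ℝ`. -/
theorem nested_relu_eq_sum (J : ℕ) (w b : ℕ → ℝ)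
    (hw : ∀ j, j < J → 0 < w j)
    (hmono : ∀ j k, j ≤ k → k < J → b k / w k ≤ b j / w j)
    (y : ℝ) :
    nested w b y J = ∑ j ∈ Finset.range J, relu (w j * y - b j) := by
  induction J with
  | zero => simp [nested]
  | succ k ih =>
    have hS := ih (fun j hj => hw j (Nat.lt_succ_of_lt hj))
      (fun j l hjl hl => hmono j l hjl (Nat.lt_succ_of_lt hl))
    rw [Finset.sum_range_succ, nested, hS]
    by_cases ht : 0 ≤ w k * y - b k
    · have hSnn : 0 ≤ ∑ j ∈ Finset.range k, relu (w j * y - b j) :=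
        Finset.sum_nonneg fun j _ => le_max_right _ _
      have h1 : relu (w k * y - b k) = w k * y - b k := max_eq_left ht
      have h2 : (∑ j ∈ Finset.range k, relu (w j * y - b j)) + w k * y - b k =
          (∑ j ∈ Finset.range k, relu (w j * y - b j)) + (w k * y - b k) := by ring
      rw [h1, h2, relu, max_eq_left (by linarith)]
    · push_neg at ht
      have hwk := hw k (Nat.lt_succ_self k)
      have hy : y < b k / w k := by
        rw [lt_div_iff₀ hwk]; nlinarith
      have hzero : ∀ j ∈ Finset.range k, relu (w j * y - b j) = 0 := by
        intro j hj
        rw [Finset.mem_range] at hj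
        have hwj := hw j (hj.trans (Nat.lt_succ_self k))
        have : y < b j / w j := lt_of_lt_of_le hy
          (hmono j k hj.le (Nat.lt_succ_self k))
        rw [lt_div_iff₀ hwj] at this
        exact max_eq_right (by nlinarith)
      rw [Finset.sum_eq_zero hzero]
      simp only [relu, zero_add]
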